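/- Let φ ∈ ℂᵐ, ψ ∈ (ℂⁿ)*, α > 0, and Φ(z) = φ · (πα)^{-n/2} e^{⟨z,ψ⟩-⟨ψ,z⟩} e^{-⟨z,z⟩/(2α)}. Then (ρ_Φ)_{ijkl} = conj(φ_i) φ_k (conj(ψ_j) ψ_l + δ_{jl}/(4α)); consequently ρ_Φ → conj(φ⊗ψ) ⊙ (φ⊗ψ) as α → ∞, so every product hermitian 2-form is a limit of integrally representable forms. -/

import Mathlib

open MeasureTheory Complex Finset Real
open scoped ComplexConjugate


lemma gauss_m1 (b : ℝ) : ∫ x : ℝ, x * Real.exp (-b * x ^ 2) = 0 := by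
  have h := MeasureTheory.integral_neg_eq_self (fun x : ℝ => x * Real.exp (-b * x ^ 2)) volume
  simp only [neg_sq] at h
  have h2 : ∫ x : ℝ, -x * Real.exp (-b * x ^ 2) = -∫ x : ℝ, x * Real.exp (-b * x ^ 2) := by
    rw [← integral_neg]; simp
  linarith [h, h2]

lemma gauss_int2 {b : ℝ} (hb : 0 < b) :
    Integrable (fun x : ℝ => x ^ 2 * Real.exp (-b * x ^ 2)) := by
  have := integrable_rpow_mul_exp_neg_mul_sq hb (s := 2) (by norm_num)
  refine this.congr (Filter.Eventually.of_forall fun x => ?_)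
  simp

lemma gauss_m2 {b : ℝ} (hb : 0 < b) :
    ∫ x : ℝ, x ^ 2 * Real.exp (-b * x ^ 2) = Real.sqrt (π / b) / (2 * b) := by
  have hu : ∀ x : ℝ, HasDerivAt (fun x : ℝ => x) 1 x := fun x => hasDerivAt_id x
  have hv : ∀ x : ℝ, HasDerivAt (fun x : ℝ => -Real.exp (-b * x ^ 2) / (2 * b))
      (x * Real.exp (-b * x ^ 2)) x := by
    intro x
    have h1 : HasDerivAt (fun x : ℝ => -b * x ^ 2) (-b * (2 * x)) x := by
      simpa using ((hasDerivAt_pow 2 x).const_mul (-b))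
    have h2 := (h1.exp).neg.div_const (2 * b)
    refine h2.congr_deriv ?_
    rw [div_eq_iff (mul_ne_zero two_ne_zero hb.ne')]
    ring
  have huv' : Integrable (fun x : ℝ => x * (x * Real.exp (-b * x ^ 2))) := by
    refine (gauss_int2 hb).congr (Filter.Eventually.of_forall fun x => ?_); ring
  have hu'v : Integrable (fun x : ℝ => (1 : ℝ) * (-Real.exp (-b * x ^ 2) / (2 * b))) := by
    refine (((integrable_exp_neg_mul_sq hb).neg).div_const (2 * b)).congr
      (Filter.Eventually.of_forall fun x => ?_); simp [Pi.neg_apply, mul_comm]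
  have huv : Integrable (fun x : ℝ => x * (-Real.exp (-b * x ^ 2) / (2 * b))) := by
    refine ((integrable_mul_exp_neg_mul_sq hb).neg.div_const (2 * b)).congr
      (Filter.Eventually.of_forall fun x => ?_); simp [Pi.neg_apply]; ring
  have key := MeasureTheory.integral_mul_deriv_eq_deriv_mul_of_integrable (fun x _ => hu x) (fun x _ => hv x) huv' hu'v huv
  beta_reduce at key
  have : ∫ x : ℝ, x ^ 2 * Real.exp (-b * x ^ 2) = ∫ x : ℝ, x * (x * Real.exp (-b * x ^ 2)) := by
    congr 1; funext x; ring
  rw [this, key]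
  rw [show (fun x : ℝ => (1:ℝ) * (-Real.exp (-b * x ^ 2) / (2 * b))) =
    (fun x : ℝ => (-(2*b))⁻¹ * Real.exp (-b * x ^ 2)) by funext x; field_simp]
  rw [integral_const_mul, integral_gaussian]
  field_simp


lemma integral_complex_eq (f : ℂ → ℂ) :
    ∫ w : ℂ, f w = ∫ p : ℝ × ℝ, f (p.1 + p.2 * Complex.I) := by
  rw [← (Complex.volume_preserving_equiv_real_prod.symm).integral_comp
    Complex.measurableEquivRealProd.symm.measurableEmbedding f]
  congr 1; funext p; rw [Complex.measurableEquivRealProd_symm_apply]; congr 1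
  exact (Complex.mk_eq_add_mul_I _ _)

lemma integrable_complex_of (f : ℂ → ℂ)
    (h : Integrable fun p : ℝ × ℝ => f (p.1 + p.2 * Complex.I)) : Integrable f := by
  rw [← MeasurePreserving.integrable_comp_emb
    (Complex.volume_preserving_equiv_real_prod.symm)
    Complex.measurableEquivRealProd.symm.measurableEmbedding]
  refine h.congr (Filter.Eventually.of_forall fun p => ?_)
  simp only [Function.comp, Complex.measurableEquivRealProd_symm_apply]
  rw [← Complex.mk_eq_add_mul_I]

lemma hexp (b x y : ℝ) :
    Real.exp (-b * (x ^ 2 + y ^ 2)) = Real.exp (-b * x ^ 2) * Real.exp (-b * y ^ 2) := by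
  rw [← Real.exp_add]; ring_nf

variable {b : ℝ}

lemma icG (hb : 0 < b) :
    Integrable fun w : ℂ => ((Real.exp (-b * Complex.normSq w) : ℝ) : ℂ) := by
  apply integrable_complex_of
  have hfun : (fun p : ℝ × ℝ => ((Real.exp (-b * Complex.normSq (↑p.1 + ↑p.2 * Complex.I)) : ℝ) : ℂ))
      = fun p : ℝ × ℝ => ((Real.exp (-b * p.1 ^ 2) : ℝ) : ℂ) * ((Real.exp (-b * p.2 ^ 2) : ℝ) : ℂ) := by
    funext p; rw [Complex.normSq_add_mul_I, hexp]; push_cast; ring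
  rw [hfun, MeasureTheory.Measure.volume_eq_prod ℝ ℝ]
  exact ((integrable_exp_neg_mul_sq hb).ofReal).mul_prod ((integrable_exp_neg_mul_sq hb).ofReal)

lemma icWG (hb : 0 < b) :
    Integrable fun w : ℂ => w * ((Real.exp (-b * Complex.normSq w) : ℝ) : ℂ) := by
  apply integrable_complex_of
  have hfun : (fun p : ℝ × ℝ => (↑p.1 + ↑p.2 * Complex.I) * ((Real.exp (-b * Complex.normSq (↑p.1 + ↑p.2 * Complex.I)) : ℝ) : ℂ))
      = fun p : ℝ × ℝ => ((p.1 * Real.exp (-b * p.1 ^ 2) : ℝ) : ℂ) * ((Real.exp (-b * p.2 ^ 2) : ℝ) : ℂ)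
        + ((Real.exp (-b * p.1 ^ 2) : ℝ) : ℂ) * (Complex.I * ((p.2 * Real.exp (-b * p.2 ^ 2) : ℝ) : ℂ)) := by
    funext p; rw [Complex.normSq_add_mul_I, hexp]; push_cast; ring
  rw [hfun, MeasureTheory.Measure.volume_eq_prod ℝ ℝ]
  exact (((integrable_mul_exp_neg_mul_sq hb).ofReal).mul_prod
      ((integrable_exp_neg_mul_sq hb).ofReal)).add
    (((integrable_exp_neg_mul_sq hb).ofReal).mul_prod
      (((integrable_mul_exp_neg_mul_sq hb).ofReal).const_mul Complex.I))

lemma icCWG (hb : 0 < b) :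
    Integrable fun w : ℂ => (starRingEnd ℂ) w * ((Real.exp (-b * Complex.normSq w) : ℝ) : ℂ) := by
  have h := (Complex.conjCLE.toContinuousLinearMap).integrable_comp (icWG hb)
  refine h.congr (Filter.Eventually.of_forall fun w => ?_)
  simp only [ContinuousLinearEquiv.coe_coe, Complex.conjCLE_apply, map_mul, Complex.conj_ofReal]

lemma icWWG (hb : 0 < b) :
    Integrable fun w : ℂ =>
      (starRingEnd ℂ) w * w * ((Real.exp (-b * Complex.normSq w) : ℝ) : ℂ) := by
  apply integrable_complex_of
  have hfun : (fun p : ℝ × ℝ => (starRingEnd ℂ) (↑p.1 + ↑p.2 * Complex.I) * (↑p.1 + ↑p.2 * Complex.I) * ((Real.exp (-b * Complex.normSq (↑p.1 + ↑p.2 * Complex.I)) : ℝ) : ℂ))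
      = fun p : ℝ × ℝ => ((p.1 ^ 2 * Real.exp (-b * p.1 ^ 2) : ℝ) : ℂ) * ((Real.exp (-b * p.2 ^ 2) : ℝ) : ℂ)
        + ((Real.exp (-b * p.1 ^ 2) : ℝ) : ℂ) * ((p.2 ^ 2 * Real.exp (-b * p.2 ^ 2) : ℝ) : ℂ) := by
    funext p
    rw [Complex.normSq_add_mul_I, hexp]
    simp only [map_add, map_mul, Complex.conj_ofReal, Complex.conj_I]
    push_cast
    ring_nf
    rw [Complex.I_sq]
    ring
  rw [hfun, MeasureTheory.Measure.volume_eq_prod ℝ ℝ]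
  exact (((gauss_int2 hb).ofReal).mul_prod ((integrable_exp_neg_mul_sq hb).ofReal)).add
    (((integrable_exp_neg_mul_sq hb).ofReal).mul_prod ((gauss_int2 hb).ofReal))


lemma cM0 (hb : 0 < b) :
    ∫ w : ℂ, ((Real.exp (-b * Complex.normSq w) : ℝ) : ℂ) = ((π / b : ℝ) : ℂ) := by
  rw [integral_complex_eq]
  have hfun : (fun p : ℝ × ℝ => ((Real.exp (-b * Complex.normSq (↑p.1 + ↑p.2 * Complex.I)) : ℝ) : ℂ))
      = fun p : ℝ × ℝ => ((Real.exp (-b * p.1 ^ 2) : ℝ) : ℂ) * ((Real.exp (-b * p.2 ^ 2) : ℝ) : ℂ) := by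
    funext p; rw [Complex.normSq_add_mul_I, hexp]; push_cast; ring
  have e1 : ∫ x : ℝ, ((Real.exp (-b * x ^ 2) : ℝ) : ℂ)
      = ((∫ x : ℝ, Real.exp (-b * x ^ 2) : ℝ) : ℂ) := integral_ofReal
  rw [hfun, MeasureTheory.Measure.volume_eq_prod ℝ ℝ,
    MeasureTheory.integral_prod_mul (fun x : ℝ => ((Real.exp (-b * x ^ 2) : ℝ) : ℂ))
      (fun y : ℝ => ((Real.exp (-b * y ^ 2) : ℝ) : ℂ)), e1, integral_gaussian]
  rw [← Complex.ofReal_mul, Real.mul_self_sqrt (div_nonneg pi_pos.le hb.le)]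

lemma cM1 (hb : 0 < b) :
    ∫ w : ℂ, w * ((Real.exp (-b * Complex.normSq w) : ℝ) : ℂ) = 0 := by
  rw [integral_complex_eq]
  have hfun : (fun p : ℝ × ℝ => (↑p.1 + ↑p.2 * Complex.I) * ((Real.exp (-b * Complex.normSq (↑p.1 + ↑p.2 * Complex.I)) : ℝ) : ℂ))
      = fun p : ℝ × ℝ => ((p.1 * Real.exp (-b * p.1 ^ 2) : ℝ) : ℂ) * ((Real.exp (-b * p.2 ^ 2) : ℝ) : ℂ)
        + ((Real.exp (-b * p.1 ^ 2) : ℝ) : ℂ) * (Complex.I * ((p.2 * Real.exp (-b * p.2 ^ 2) : ℝ) : ℂ)) := by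
    funext p; rw [Complex.normSq_add_mul_I, hexp]; push_cast; ring
  have hI1 : Integrable (fun p : ℝ × ℝ =>
      ((p.1 * Real.exp (-b * p.1 ^ 2) : ℝ) : ℂ) * ((Real.exp (-b * p.2 ^ 2) : ℝ) : ℂ))
      ((volume : Measure ℝ).prod volume) :=
    ((integrable_mul_exp_neg_mul_sq hb).ofReal).mul_prod ((integrable_exp_neg_mul_sq hb).ofReal)
  have hI2 : Integrable (fun p : ℝ × ℝ =>
      ((Real.exp (-b * p.1 ^ 2) : ℝ) : ℂ) * (Complex.I * ((p.2 * Real.exp (-b * p.2 ^ 2) : ℝ) : ℂ)))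
      ((volume : Measure ℝ).prod volume) :=
    ((integrable_exp_neg_mul_sq hb).ofReal).mul_prod
      (((integrable_mul_exp_neg_mul_sq hb).ofReal).const_mul Complex.I)
  have e1 : ∫ x : ℝ, ((x * Real.exp (-b * x ^ 2) : ℝ) : ℂ)
      = ((∫ x : ℝ, x * Real.exp (-b * x ^ 2) : ℝ) : ℂ) := integral_ofReal
  rw [hfun, MeasureTheory.Measure.volume_eq_prod ℝ ℝ, MeasureTheory.integral_add hI1 hI2,
    MeasureTheory.integral_prod_mul (fun x : ℝ => ((x * Real.exp (-b * x ^ 2) : ℝ) : ℂ))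
      (fun y : ℝ => ((Real.exp (-b * y ^ 2) : ℝ) : ℂ)),
    MeasureTheory.integral_prod_mul (fun x : ℝ => ((Real.exp (-b * x ^ 2) : ℝ) : ℂ))
      (fun y : ℝ => Complex.I * ((y * Real.exp (-b * y ^ 2) : ℝ) : ℂ)),
    MeasureTheory.integral_const_mul, e1, gauss_m1 b]
  simp

lemma cM1' (hb : 0 < b) :
    ∫ w : ℂ, (starRingEnd ℂ) w * ((Real.exp (-b * Complex.normSq w) : ℝ) : ℂ) = 0 := by
  have : (fun w : ℂ => (starRingEnd ℂ) w * ((Real.exp (-b * Complex.normSq w) : ℝ) : ℂ))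
      = fun w : ℂ => (starRingEnd ℂ) (w * ((Real.exp (-b * Complex.normSq w) : ℝ) : ℂ)) := by
    funext w; simp only [map_mul, Complex.conj_ofReal]
  rw [this, integral_conj, cM1 hb, map_zero]

lemma cM2 (hb : 0 < b) :
    ∫ w : ℂ, (starRingEnd ℂ) w * w * ((Real.exp (-b * Complex.normSq w) : ℝ) : ℂ)
      = ((π / b ^ 2 : ℝ) : ℂ) := by
  rw [integral_complex_eq]
  have hfun : (fun p : ℝ × ℝ => (starRingEnd ℂ) (↑p.1 + ↑p.2 * Complex.I) * (↑p.1 + ↑p.2 * Complex.I) * ((Real.exp (-b * Complex.normSq (↑p.1 + ↑p.2 * Complex.I)) : ℝ) : ℂ))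
      = fun p : ℝ × ℝ => ((p.1 ^ 2 * Real.exp (-b * p.1 ^ 2) : ℝ) : ℂ) * ((Real.exp (-b * p.2 ^ 2) : ℝ) : ℂ)
        + ((Real.exp (-b * p.1 ^ 2) : ℝ) : ℂ) * ((p.2 ^ 2 * Real.exp (-b * p.2 ^ 2) : ℝ) : ℂ) := by
    funext p
    rw [Complex.normSq_add_mul_I, hexp]
    simp only [map_add, map_mul, Complex.conj_ofReal, Complex.conj_I]
    push_cast
    ring_nf
    rw [Complex.I_sq]
    ring
  have hI1 : Integrable (fun p : ℝ × ℝ =>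
      ((p.1 ^ 2 * Real.exp (-b * p.1 ^ 2) : ℝ) : ℂ) * ((Real.exp (-b * p.2 ^ 2) : ℝ) : ℂ))
      ((volume : Measure ℝ).prod volume) :=
    ((gauss_int2 hb).ofReal).mul_prod ((integrable_exp_neg_mul_sq hb).ofReal)
  have hI2 : Integrable (fun p : ℝ × ℝ =>
      ((Real.exp (-b * p.1 ^ 2) : ℝ) : ℂ) * ((p.2 ^ 2 * Real.exp (-b * p.2 ^ 2) : ℝ) : ℂ))
      ((volume : Measure ℝ).prod volume) :=
    ((integrable_exp_neg_mul_sq hb).ofReal).mul_prod ((gauss_int2 hb).ofReal)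
  have e1 : ∫ x : Real, ((x ^ 2 * Real.exp (-b * x ^ 2) : ℝ) : ℂ)
      = ((∫ x : ℝ, x ^ 2 * Real.exp (-b * x ^ 2) : ℝ) : ℂ) := integral_ofReal
  have e2 : ∫ x : ℝ, ((Real.exp (-b * x ^ 2) : ℝ) : ℂ)
      = ((∫ x : ℝ, Real.exp (-b * x ^ 2) : ℝ) : ℂ) := integral_ofReal
  rw [hfun, MeasureTheory.Measure.volume_eq_prod ℝ ℝ, MeasureTheory.integral_add hI1 hI2,
    MeasureTheory.integral_prod_mul (fun x : ℝ => ((x ^ 2 * Real.exp (-b * x ^ 2) : ℝ) : ℂ))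
      (fun y : ℝ => ((Real.exp (-b * y ^ 2) : ℝ) : ℂ)),
    MeasureTheory.integral_prod_mul (fun x : ℝ => ((Real.exp (-b * x ^ 2) : ℝ) : ℂ))
      (fun y : ℝ => ((y ^ 2 * Real.exp (-b * y ^ 2) : ℝ) : ℂ)),
    e1, e2, gauss_m2 hb, integral_gaussian]
  rw [← Complex.ofReal_mul, ← Complex.ofReal_mul, ← Complex.ofReal_add]
  congr 1
  have h : √(π / b) * √(π / b) = π / b := Real.mul_self_sqrt (div_nonneg pi_pos.le hb.le)
  have hb' : b ≠ 0 := ne_of_gt hb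
  linear_combination h / b


noncomputable def gFac (α : ℝ) (w : ℂ) : ℂ :=
  (((π * α)⁻¹ : ℝ) : ℂ) * ((Real.exp (-α⁻¹ * Complex.normSq w) : ℝ) : ℂ)

section gfac
variable {α : ℝ}

lemma hbinv (hα : 0 < α) : 0 < α⁻¹ := inv_pos.mpr hα

lemma iG (hα : 0 < α) : Integrable (gFac α) :=
  ((icG (hbinv hα)).const_mul _)

lemma iWG (hα : 0 < α) : Integrable fun w => w * gFac α w := by
  refine ((icWG (hbinv hα)).const_mul (((π * α)⁻¹ : ℝ) : ℂ)).congr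
    (Filter.Eventually.of_forall fun w => ?_)
  unfold gFac; ring

lemma iCWG (hα : 0 < α) : Integrable fun w => (starRingEnd ℂ) w * gFac α w := by
  refine ((icCWG (hbinv hα)).const_mul (((π * α)⁻¹ : ℝ) : ℂ)).congr
    (Filter.Eventually.of_forall fun w => ?_)
  unfold gFac; ring

lemma iWWG (hα : 0 < α) : Integrable fun w => (starRingEnd ℂ) w * w * gFac α w := by
  refine ((icWWG (hbinv hα)).const_mul (((π * α)⁻¹ : ℝ) : ℂ)).congr
    (Filter.Eventually.of_forall fun w => ?_)
  unfold gFac; ring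

lemma intG (hα : 0 < α) : ∫ w : ℂ, gFac α w = 1 := by
  unfold gFac
  rw [MeasureTheory.integral_const_mul, cM0 (hbinv hα), ← Complex.ofReal_mul]
  rw [show (π * α)⁻¹ * (π / α⁻¹) = 1 by field_simp]
  simp

lemma intWG (hα : 0 < α) : ∫ w : ℂ, w * gFac α w = 0 := by
  have : (fun w : ℂ => w * gFac α w)
      = fun w => (((π * α)⁻¹ : ℝ) : ℂ) * (w * ((Real.exp (-α⁻¹ * Complex.normSq w) : ℝ) : ℂ)) := by
    funext w; unfold gFac; ring
  rw [this, MeasureTheory.integral_const_mul, cM1 (hbinv hα), mul_zero]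

lemma intCWG (hα : 0 < α) : ∫ w : ℂ, (starRingEnd ℂ) w * gFac α w = 0 := by
  have : (fun w : ℂ => (starRingEnd ℂ) w * gFac α w)
      = fun w => (((π * α)⁻¹ : ℝ) : ℂ) *
          ((starRingEnd ℂ) w * ((Real.exp (-α⁻¹ * Complex.normSq w) : ℝ) : ℂ)) := by
    funext w; unfold gFac; ring
  rw [this, MeasureTheory.integral_const_mul, cM1' (hbinv hα), mul_zero]

lemma intWWG (hα : 0 < α) : ∫ w : ℂ, (starRingEnd ℂ) w * w * gFac α w = ((α : ℝ) : ℂ) := by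
  have : (fun w : ℂ => (starRingEnd ℂ) w * w * gFac α w)
      = fun w => (((π * α)⁻¹ : ℝ) : ℂ) *
          ((starRingEnd ℂ) w * w * ((Real.exp (-α⁻¹ * Complex.normSq w) : ℝ) : ℂ)) := by
    funext w; unfold gFac; ring
  rw [this, MeasureTheory.integral_const_mul, cM2 (hbinv hα), ← Complex.ofReal_mul]
  congr 1
  field_simp

lemma cint1 (hα : 0 < α) (bc : ℂ) :
    ∫ w : ℂ, (bc - w / (2 * (α : ℂ))) * gFac α w = bc := by
  have hfun : (fun w : ℂ => (bc - w / (2 * (α : ℂ))) * gFac α w)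
      = fun w => bc * gFac α w - (2 * (α : ℂ))⁻¹ * (w * gFac α w) := by
    funext w; field_simp
  have h1 : Integrable (fun w : ℂ => bc * gFac α w) := (iG hα).const_mul bc
  have h2 : Integrable (fun w : ℂ => (2 * (α : ℂ))⁻¹ * (w * gFac α w)) := (iWG hα).const_mul _
  rw [hfun, MeasureTheory.integral_sub h1 h2,
    MeasureTheory.integral_const_mul, MeasureTheory.integral_const_mul, intG hα, intWG hα]
  simp

lemma cint1' (hα : 0 < α) (ac : ℂ) :
    ∫ w : ℂ, (starRingEnd ℂ) (ac - w / (2 * (α : ℂ))) * gFac α w = (starRingEnd ℂ) ac := by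
  have hfun : (fun w : ℂ => (starRingEnd ℂ) (ac - w / (2 * (α : ℂ))) * gFac α w)
      = fun w => (starRingEnd ℂ) ((ac - w / (2 * (α : ℂ))) * gFac α w) := by
    funext w
    rw [map_mul]
    congr 1
    unfold gFac
    rw [map_mul, Complex.conj_ofReal, Complex.conj_ofReal]
  rw [hfun, integral_conj, cint1 hα]

lemma cint2 (hα : 0 < α) (ac bc : ℂ) :
    ∫ w : ℂ, (starRingEnd ℂ) (ac - w / (2 * (α : ℂ))) * (bc - w / (2 * (α : ℂ))) * gFac α w
      = (starRingEnd ℂ) ac * bc + 1 / (4 * (α : ℂ)) := by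
  have hα' : (α : ℂ) ≠ 0 := Complex.ofReal_ne_zero.mpr (ne_of_gt hα)
  have hfun : (fun w : ℂ => (starRingEnd ℂ) (ac - w / (2 * (α : ℂ))) * (bc - w / (2 * (α : ℂ))) * gFac α w)
      = fun w => ((starRingEnd ℂ) ac * bc) * gFac α w
        - ((starRingEnd ℂ) ac * (2 * (α : ℂ))⁻¹) * (w * gFac α w)
        - (bc * (2 * (α : ℂ))⁻¹) * ((starRingEnd ℂ) w * gFac α w)
        + ((4 : ℂ) * (α : ℂ) ^ 2)⁻¹ * ((starRingEnd ℂ) w * w * gFac α w) := by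
    funext w
    rw [map_sub, map_div₀, map_mul]
    rw [map_ofNat (starRingEnd ℂ) 2, Complex.conj_ofReal]
    field_simp
    ring
  have h1 : Integrable (fun w : ℂ => (starRingEnd ℂ) ac * bc * gFac α w) := (iG hα).const_mul _
  have h2 : Integrable (fun w : ℂ => (starRingEnd ℂ) ac * (2 * (α : ℂ))⁻¹ * (w * gFac α w)) :=
    (iWG hα).const_mul _
  have h3 : Integrable (fun w : ℂ => bc * (2 * (α : ℂ))⁻¹ * ((starRingEnd ℂ) w * gFac α w)) :=
    (iCWG hα).const_mul _
  have h4 : Integrable (fun w : ℂ =>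
      ((4 : ℂ) * (α : ℂ) ^ 2)⁻¹ * ((starRingEnd ℂ) w * w * gFac α w)) := (iWWG hα).const_mul _
  have h12 : Integrable (fun w : ℂ => (starRingEnd ℂ) ac * bc * gFac α w
      - (starRingEnd ℂ) ac * (2 * (α : ℂ))⁻¹ * (w * gFac α w)) := h1.sub h2
  have h123 : Integrable (fun w : ℂ => (starRingEnd ℂ) ac * bc * gFac α w
      - (starRingEnd ℂ) ac * (2 * (α : ℂ))⁻¹ * (w * gFac α w)
      - bc * (2 * (α : ℂ))⁻¹ * ((starRingEnd ℂ) w * gFac α w)) := h12.sub h3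
  rw [hfun, MeasureTheory.integral_add h123 h4, MeasureTheory.integral_sub h12 h3,
    MeasureTheory.integral_sub h1 h2,
    MeasureTheory.integral_const_mul, MeasureTheory.integral_const_mul,
    MeasureTheory.integral_const_mul, MeasureTheory.integral_const_mul,
    intG hα, intWG hα, intCWG hα, intWWG hα]
  field_simp
  ring

end gfac

/-- The hermitian pairing `⟨z,w⟩ = Σ_j conj(z_j) w_j` on `ℂⁿ`. -/
noncomputable def hermInner {n : ℕ} (z w : Fin n → ℂ) : ℂ := ∑ j, conj (z j) * w j

/-- The Gaussian wave packet
`f_w(z) = e^{⟨z,w⟩-⟨w,z⟩} (πα)^{-n/2} e^{-⟨z,z⟩/(2α)}`. -/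
noncomputable def gaussPacket {n : ℕ} (α : ℝ) (w : Fin n → ℂ) (z : Fin n → ℂ) : ℂ :=
  Complex.exp (hermInner z w - hermInner w z) *
    (((π * α) ^ (-(n : ℝ) / 2) : ℝ) : ℂ) * Complex.exp (-(hermInner z z) / (2 * α))

lemma conj_hermInner {n : ℕ} (z w : Fin n → ℂ) :
    (starRingEnd ℂ) (hermInner z w) = hermInner w z := by
  unfold hermInner
  rw [map_sum]
  refine Finset.sum_congr rfl fun c _ => ?_
  rw [map_mul, RingHomCompTriple.comp_apply, RingHom.id_apply]
  ring

lemma hermInner_self {n : ℕ} (z : Fin n → ℂ) :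
    hermInner z z = ((∑ c, Complex.normSq (z c) : ℝ) : ℂ) := by
  unfold hermInner
  push_cast
  refine Finset.sum_congr rfl fun c _ => ?_
  rw [Complex.normSq_eq_conj_mul_self]

lemma packet_sq {n : ℕ} {α : ℝ} (hα : 0 < α) (ψ z : Fin n → ℂ) :
    (starRingEnd ℂ) (gaussPacket α ψ z) * gaussPacket α ψ z = ∏ c, gFac α (z c) := by
  have hπα : 0 < π * α := mul_pos pi_pos hα
  have hα' : (α : ℂ) ≠ 0 := Complex.ofReal_ne_zero.mpr (ne_of_gt hα)
  set A := hermInner z ψ - hermInner ψ z with hAdef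
  set B := -(hermInner z z) / (2 * (α : ℂ)) with hBdef
  have hA : (starRingEnd ℂ) A = -A := by
    rw [hAdef, map_sub, conj_hermInner, conj_hermInner]; ring
  have hB : (starRingEnd ℂ) B = B := by
    rw [hBdef, map_div₀, map_neg, hermInner_self, Complex.conj_ofReal, map_mul,
      map_ofNat, Complex.conj_ofReal]
  have hBB : B + B = ((-α⁻¹ * ∑ c, Complex.normSq (z c) : ℝ) : ℂ) := by
    rw [hBdef, hermInner_self]
    push_cast
    field_simp
    ring
  unfold gaussPacket
  rw [map_mul, map_mul, ← Complex.exp_conj, ← Complex.exp_conj, hA, hB, Complex.conj_ofReal]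
  have key : Complex.exp (-A) * ((((π * α) ^ (-(n : ℝ) / 2) : ℝ) : ℂ)) * Complex.exp B *
      (Complex.exp A * ((((π * α) ^ (-(n : ℝ) / 2) : ℝ) : ℂ)) * Complex.exp B)
      = ((((π * α) ^ (-(n : ℝ) / 2) * (π * α) ^ (-(n : ℝ) / 2) : ℝ) : ℂ)) *
        (Complex.exp (-A) * Complex.exp A) * Complex.exp (B + B) := by
    rw [Complex.exp_add]; push_cast; ring
  rw [key, ← Complex.exp_add, neg_add_cancel, Complex.exp_zero, mul_one, hBB]
  have hC : (π * α) ^ (-(n : ℝ) / 2) * (π * α) ^ (-(n : ℝ) / 2) = ((π * α)⁻¹) ^ n := by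
    rw [← Real.rpow_add hπα]
    rw [show -(n : ℝ) / 2 + -(n : ℝ) / 2 = -(n : ℝ) by ring]
    rw [Real.rpow_neg hπα.le, Real.rpow_natCast, inv_pow]
  rw [hC]
  have hE : Real.exp (-α⁻¹ * ∑ c, Complex.normSq (z c))
      = ∏ c, Real.exp (-α⁻¹ * Complex.normSq (z c)) := by
    rw [← Real.exp_sum, Finset.mul_sum]
  rw [← Complex.ofReal_exp, hE]
  unfold gFac
  rw [Finset.prod_mul_distrib, Finset.prod_const, Finset.card_univ, Fintype.card_fin]
  push_cast
  ring


lemma main_integral {n m : ℕ} (φ : Fin m → ℂ) (ψ : Fin n → ℂ)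
    (i k : Fin m) (j l : Fin n) {α : ℝ} (hα : 0 < α) :
    (∫ z : Fin n → ℂ,
        conj (φ i * (ψ j - z j / (2 * α)) * gaussPacket α ψ z) *
          (φ k * (ψ l - z l / (2 * α)) * gaussPacket α ψ z)) =
      conj (φ i) * φ k * (conj (ψ j) * ψ l + (if j = l then 1 else 0) / (4 * α)) := by
  set hFun : Fin n → ℂ → ℂ := fun c w =>
    (if c = j then (starRingEnd ℂ) (ψ j - w / (2 * (α : ℂ))) else 1) *
      (if c = l then (ψ l - w / (2 * (α : ℂ))) else 1) * gFac α w with hFdef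
  have hfun : (fun z : Fin n → ℂ =>
      conj (φ i * (ψ j - z j / (2 * α)) * gaussPacket α ψ z) *
        (φ k * (ψ l - z l / (2 * α)) * gaussPacket α ψ z))
      = fun z => conj (φ i) * φ k * ∏ c, hFun c (z c) := by
    funext z
    have h1 : ∏ c, hFun c (z c)
        = (starRingEnd ℂ) (ψ j - z j / (2 * (α : ℂ))) * (ψ l - z l / (2 * (α : ℂ))) *
          ∏ c, gFac α (z c) := by
      rw [hFdef]
      rw [Finset.prod_mul_distrib, Finset.prod_mul_distrib]
      rw [Finset.prod_ite_eq' Finset.univ j fun c => (starRingEnd ℂ) (ψ j - z c / (2 * (α : ℂ))),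
        Finset.prod_ite_eq' Finset.univ l fun c => ψ l - z c / (2 * (α : ℂ))]
      simp
    rw [h1, ← packet_sq hα ψ z]
    rw [map_mul, map_mul]
    ring
  rw [hfun, MeasureTheory.integral_const_mul,
    MeasureTheory.volume_pi, MeasureTheory.integral_fintype_prod_eq_prod (ι := Fin n) hFun]
  congr 1
  have hval : ∀ c : Fin n, (∫ w : ℂ, hFun c w)
      = if c = j then (if c = l then (starRingEnd ℂ) (ψ j) * ψ l + 1 / (4 * (α : ℂ))
          else (starRingEnd ℂ) (ψ j))
        else (if c = l then ψ l else 1) := by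
    intro c
    rcases eq_or_ne c j with hc | hc
    · rcases eq_or_ne c l with hc2 | hc2
      · rw [show (∫ w : ℂ, hFun c w)
            = ∫ w : ℂ, (starRingEnd ℂ) (ψ j - w / (2 * (α : ℂ))) *
                (ψ l - w / (2 * (α : ℂ))) * gFac α w from by
            congr 1; funext w; simp only [hFdef, if_pos hc, if_pos hc2],
          cint2 hα (ψ j) (ψ l), if_pos hc, if_pos hc2]
      · rw [show (∫ w : ℂ, hFun c w)
            = ∫ w : ℂ, (starRingEnd ℂ) (ψ j - w / (2 * (α : ℂ))) * gFac α w from by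
            congr 1; funext w; simp only [hFdef, if_pos hc, if_neg hc2, mul_one],
          cint1' hα (ψ j), if_pos hc, if_neg hc2]
    · rcases eq_or_ne c l with hc2 | hc2
      · rw [show (∫ w : ℂ, hFun c w) = ∫ w : ℂ, (ψ l - w / (2 * (α : ℂ))) * gFac α w from by
            congr 1; funext w; simp only [hFdef, if_neg hc, if_pos hc2, one_mul],
          cint1 hα (ψ l), if_neg hc, if_pos hc2]
      · rw [show (∫ w : ℂ, hFun c w) = ∫ w : ℂ, gFac α w from by
            congr 1; funext w; simp only [hFdef, if_neg hc, if_neg hc2, one_mul],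
          intG hα, if_neg hc, if_neg hc2]
  rw [Finset.prod_congr rfl fun c _ => hval c]
  rcases eq_or_ne j l with hjl | hjl
  · subst hjl
    rw [show (fun c => if c = j then (if c = j then (starRingEnd ℂ) (ψ j) * ψ j
        + 1 / (4 * (α : ℂ)) else (starRingEnd ℂ) (ψ j)) else (if c = j then ψ j else 1))
        = fun c => if c = j then (starRingEnd ℂ) (ψ j) * ψ j + 1 / (4 * (α : ℂ)) else 1 from by
        funext c; rcases eq_or_ne c j with h | h <;> simp [h]]
    rw [Finset.prod_ite_eq' Finset.univ j _, if_pos (Finset.mem_univ j)]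
    simp
  · rw [show (fun c => if c = j then (if c = l then (starRingEnd ℂ) (ψ j) * ψ l
        + 1 / (4 * (α : ℂ)) else (starRingEnd ℂ) (ψ j)) else (if c = l then ψ l else 1))
        = fun c => (if c = j then (starRingEnd ℂ) (ψ j) else 1) * (if c = l then ψ l else 1) from by
        funext c
        rcases eq_or_ne c j with h | h
        · subst h; rw [if_pos rfl, if_pos rfl, if_neg (fun h2 : c = l => hjl (by rw [← h2])), if_neg (fun h2 : c = l => hjl (by rw [← h2]))]
          ring
        · rw [if_neg h, if_neg h, one_mul]]
    rw [Finset.prod_mul_distrib, Finset.prod_ite_eq' Finset.univ j _,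
      Finset.prod_ite_eq' Finset.univ l _]
    simp [hjl]

/-- for `Φ(z) = φ f_ψ(z)` one has
`(ρ_Φ)_{ijkl} = conj(φ_i) φ_k (conj(ψ_j) ψ_l + δ_{jl}/(4α))`
(with `∂̄_{z_j}Φ_i(z) = φ_i (ψ_j - z_j/(2α)) f_ψ(z)`), and consequently
`ρ_Φ → conj(φ⊗ψ) ⊙ (φ⊗ψ)` as `α → ∞`: every product hermitian 2-form is a
limit of integrally representable forms. -/
theorem product_form_approx (n m : ℕ) (φ : Fin m → ℂ) (ψ : Fin n → ℂ)
    (i k : Fin m) (j l : Fin n) :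
    (∀ α : ℝ, 0 < α →
      (∫ z : Fin n → ℂ,
          conj (φ i * (ψ j - z j / (2 * α)) * gaussPacket α ψ z) *
            (φ k * (ψ l - z l / (2 * α)) * gaussPacket α ψ z)) =
        conj (φ i) * φ k * (conj (ψ j) * ψ l + (if j = l then 1 else 0) / (4 * α))) ∧
    Filter.Tendsto
      (fun α : ℝ => ∫ z : Fin n → ℂ,
          conj (φ i * (ψ j - z j / (2 * α)) * gaussPacket α ψ z) *
            (φ k * (ψ l - z l / (2 * α)) * gaussPacket α ψ z))
      Filter.atTop (nhds (conj (φ i * ψ j) * (φ k * ψ l))) := by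
  refine ⟨fun α hα => main_integral φ ψ i k j l hα, ?_⟩
  have hev : (fun α : ℝ => conj (φ i) * φ k *
      (conj (ψ j) * ψ l + (if j = l then 1 else 0) / (4 * (α : ℂ)))) =ᶠ[Filter.atTop]
      (fun α : ℝ => ∫ z : Fin n → ℂ,
          conj (φ i * (ψ j - z j / (2 * α)) * gaussPacket α ψ z) *
            (φ k * (ψ l - z l / (2 * α)) * gaussPacket α ψ z)) := by
    filter_upwards [Filter.eventually_gt_atTop (0 : ℝ)] with α hα
    exact (main_integral φ ψ i k j l hα).symm
  refine Filter.Tendsto.congr' hev ?_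
  have hz : Filter.Tendsto (fun α : ℝ => ((4 * α)⁻¹ : ℝ)) Filter.atTop (nhds 0) := by
    apply Filter.Tendsto.inv_tendsto_atTop
    exact Filter.Tendsto.const_mul_atTop (by norm_num) Filter.tendsto_id
  have hzc : Filter.Tendsto (fun α : ℝ => (((4 * α)⁻¹ : ℝ) : ℂ)) Filter.atTop (nhds 0) := by
    rw [show ((0 : ℂ)) = ((0 : ℝ) : ℂ) by simp]
    exact (Complex.continuous_ofReal.tendsto 0).comp hz
  have hfun : (fun α : ℝ => conj (φ i) * φ k *
      (conj (ψ j) * ψ l + (if j = l then 1 else 0) / (4 * (α : ℂ))))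
      = fun α : ℝ => conj (φ i) * φ k *
        (conj (ψ j) * ψ l + (if j = l then 1 else 0) * (((4 * α)⁻¹ : ℝ) : ℂ)) := by
    funext α
    congr 1
    congr 1
    push_cast
    ring
  rw [hfun]
  have := (((hzc.const_mul (if j = l then (1 : ℂ) else 0)).const_add
      (conj (ψ j) * ψ l)).const_mul (conj (φ i) * φ k))
  simpa [map_mul, mul_comm, mul_left_comm, mul_assoc] using this
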